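/- (Commutative case of Theorem 3.6.) Let (Ω,Σ,μ) be a σ-finite measure space and let a_n : L^∞(Ω,μ;ℂ) → L⁰(Ω,μ;ℂ) be a sequence of linear maps such that: each a_n is positive (x ≥ 0 μ-a.e. implies a_n(x) ≥ 0 μ-a.e.); a_n(1) ≤ 1 μ-a.e. for all n; and each a_n is sequentially continuous with respect to the measure topology (if x_k, x ∈ L^∞ and x_k → x in the measure topology then a_n(x_k) → a_n(x) in the measure topology). If for every x ∈ L^∞ with ‖x‖_∞ ≤ 1 the sequence (a_n(x))_n converges almost uniformly, then (a_n) is uniformly equicontinuous at 0 on the unit ball { x ∈ L^∞ : ‖x‖_∞ ≤ 1 }. -/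

import Mathlib

open MeasureTheory Filter Topology
open scoped ENNReal ComplexOrder

/-- `gs k → g` in the measure topology: for all `ε, δ > 0`, eventually in `k` there is a
measurable set `E` with `μ(Ω∖E) ≤ ε` and `|gs k − g| ≤ δ` a.e. on `E`. -/
def TendstoMeasTop {Ω : Type*} [MeasurableSpace Ω] (μ : Measure Ω)
    (gs : ℕ → Ω → ℂ) (g : Ω → ℂ) : Prop :=
  ∀ ε δ : ℝ, 0 < ε → 0 < δ → ∃ K : ℕ, ∀ k ≥ K, ∃ E : Set Ω, MeasurableSet E ∧
    μ Eᶜ ≤ ENNReal.ofReal ε ∧ ∀ᵐ ω ∂μ.restrict E, ‖gs k ω - g ω‖ ≤ δ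

/-- `gs n → g` almost uniformly. -/
def ConvAU {Ω : Type*} [MeasurableSpace Ω] (μ : Measure Ω) (gs : ℕ → Ω → ℂ) (g : Ω → ℂ) :
    Prop :=
  ∀ ε : ℝ, 0 < ε → ∃ E : Set Ω, MeasurableSet E ∧ μ Eᶜ ≤ ENNReal.ofReal ε ∧
    Filter.Tendsto (fun n => essSup (fun ω => (‖gs n ω - g ω‖₊ : ℝ≥0∞)) (μ.restrict E))
      Filter.atTop (nhds 0)

/-- Uniform equicontinuity at `0` on `E ⊆ L^∞` of the maps `a_n : L^∞ → L⁰`. -/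
def UnifEquicont {Ω : Type*} [MeasurableSpace Ω] (μ : Measure Ω)
    (a : ℕ → (Lp ℂ ⊤ μ) → (Ω →ₘ[μ] ℂ)) (E : Set (Lp ℂ ⊤ μ)) : Prop :=
  ∀ ε δ : ℝ, 0 < ε → 0 < δ → ∃ γ : ℝ, 0 < γ ∧ ∀ x ∈ E,
    (∃ F : Set Ω, MeasurableSet F ∧ μ Fᶜ ≤ ENNReal.ofReal γ ∧
      ∀ᵐ ω ∂μ.restrict F, ‖(x : Ω → ℂ) ω‖ ≤ γ) →
    ∃ G : Set Ω, MeasurableSet G ∧ μ Gᶜ ≤ ENNReal.ofReal ε ∧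
      ∀ n, essSup (fun ω => (‖(a n x : Ω → ℂ) ω‖₊ : ℝ≥0∞)) (μ.restrict G) ≤
        ENNReal.ofReal δ

namespace Stmt16

variable {Ω : Type*} [MeasurableSpace Ω] {μ : Measure Ω}

/-- Ky Fan style closeness relation. -/
def KF (μ : Measure Ω) (f g : Ω → ℂ) (c : ℝ) : Prop :=
  μ {ω | c < ‖f ω - g ω‖} ≤ ENNReal.ofReal c

theorem KF.mono {f g : Ω → ℂ} {c c' : ℝ} (hcc : c ≤ c') (h : KF μ f g c) : KF μ f g c' :=
  le_trans (measure_mono fun ω hω => lt_of_le_of_lt hcc hω)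
    (h.trans (ENNReal.ofReal_le_ofReal hcc))

theorem KF.refl (f : Ω → ℂ) {c : ℝ} (hc : 0 ≤ c) : KF μ f f c := by
  have h : {ω : Ω | c < ‖f ω - f ω‖} = ∅ := by
    ext ω; simp [not_lt.2 hc]
  unfold KF
  rw [h]
  simp

theorem KF.triangle {f g h : Ω → ℂ} {b c : ℝ} (hb : 0 ≤ b) (hc : 0 ≤ c)
    (h1 : KF μ f g b) (h2 : KF μ g h c) : KF μ f h (b + c) := by
  unfold KF at *
  have hsub : {ω | b + c < ‖f ω - h ω‖} ⊆
      {ω | b < ‖f ω - g ω‖} ∪ {ω | c < ‖g ω - h ω‖} := by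
    intro ω hω
    simp only [Set.mem_setOf_eq] at hω
    by_contra hcon
    simp only [Set.mem_union, Set.mem_setOf_eq, not_or, not_lt] at hcon
    have h3 : ‖f ω - h ω‖ ≤ ‖f ω - g ω‖ + ‖g ω - h ω‖ := by
      have := norm_add_le (f ω - g ω) (g ω - h ω)
      simpa using this
    linarith [hcon.1, hcon.2]
  calc μ {ω | b + c < ‖f ω - h ω‖}
      ≤ μ ({ω | b < ‖f ω - g ω‖} ∪ {ω | c < ‖g ω - h ω‖}) := measure_mono hsub
    _ ≤ μ {ω | b < ‖f ω - g ω‖} + μ {ω | c < ‖g ω - h ω‖} := measure_union_le _ _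
    _ ≤ ENNReal.ofReal b + ENNReal.ofReal c := add_le_add h1 h2
    _ = ENNReal.ofReal (b + c) := (ENNReal.ofReal_add hb hc).symm

theorem meas_norm_congr {f g : Ω → ℂ} (h : f =ᵐ[μ] g) (c : ℝ) :
    μ {ω | c < ‖f ω‖} = μ {ω | c < ‖g ω‖} :=
  measure_congr (Filter.eventuallyEq_set.2 (h.mono fun ω hω => by
    simp only [Set.mem_setOf_eq, hω]))

theorem KF.congr {f f' g g' : Ω → ℂ} {c : ℝ} (hf : f =ᵐ[μ] f') (hg : g =ᵐ[μ] g')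
    (h : KF μ f g c) : KF μ f' g' c := by
  unfold KF at *
  have heq := meas_norm_congr (μ := μ)
    (f := fun ω => f' ω - g' ω) (g := fun ω => f ω - g ω)
    (by filter_upwards [hf, hg] with ω h1 h2; rw [h1, h2]) c
  rw [heq]
  exact h

theorem meas_le_compl {E S : Set Ω} (hE : MeasurableSet E) (h0 : μ (S ∩ E) = 0) :
    μ S ≤ μ Eᶜ := by
  calc μ S ≤ μ ((S ∩ E) ∪ Eᶜ) := measure_mono (fun ω hω => by
        by_cases h : ω ∈ E
        exacts [Or.inl ⟨hω, h⟩, Or.inr h])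
    _ ≤ μ (S ∩ E) + μ Eᶜ := measure_union_le _ _
    _ = μ Eᶜ := by rw [h0, zero_add]

theorem restrict_null {E S : Set Ω} (hE : MeasurableSet E) {p : Ω → Prop}
    (hae : ∀ᵐ ω ∂μ.restrict E, p ω) (hS : ∀ ω ∈ S, ¬ p ω) : μ (S ∩ E) = 0 := by
  have h1 : μ.restrict E {ω | ¬ p ω} = 0 := hae
  rw [Measure.restrict_apply' hE] at h1
  refine measure_mono_null (fun ω hω => ?_) h1
  exact ⟨hS ω hω.1, hω.2⟩

theorem meas_gt_le_of_restrict {E : Set Ω} (hE : MeasurableSet E) {f : Ω → ℂ} {c : ℝ}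
    (hae : ∀ᵐ ω ∂μ.restrict E, ‖f ω‖ ≤ c) : μ {ω | c < ‖f ω‖} ≤ μ Eᶜ :=
  meas_le_compl hE (restrict_null hE hae fun ω hω => not_le.2 hω)

/-- Consume a `TendstoMeasTop` statement as a measure bound. -/
theorem tmt_meas_le {gs : ℕ → Ω → ℂ} {g : Ω → ℂ} (h : TendstoMeasTop μ gs g)
    {ε δv : ℝ} (hε : 0 < ε) (hδ : 0 < δv) :
    ∃ K, ∀ k ≥ K, μ {ω | δv < ‖gs k ω - g ω‖} ≤ ENNReal.ofReal ε := by
  obtain ⟨K, hK⟩ := h ε δv hε hδ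
  refine ⟨K, fun k hk => ?_⟩
  obtain ⟨E, hEm, hEc, hEae⟩ := hK k hk
  exact le_trans (meas_gt_le_of_restrict hEm hEae) hEc

/-- Produce a `TendstoMeasTop` statement from Ky Fan closeness at rate `1/(k+1)`. -/
theorem tmt_of_kf {zs : ℕ → Ω → ℂ} {y : Ω → ℂ}
    (hz : ∀ k, StronglyMeasurable (zs k)) (hy : StronglyMeasurable y)
    (h : ∀ k : ℕ, KF μ (zs k) y (1 / (k + 1 : ℝ))) :
    TendstoMeasTop μ zs y := by
  intro ε δv hε hδ
  obtain ⟨K, hK⟩ := exists_nat_gt (max (1/ε) (1/δv))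
  refine ⟨K, fun k hk => ?_⟩
  have hkpos : (0:ℝ) < (k:ℝ) + 1 := by positivity
  have hkε : 1 / ((k:ℝ) + 1) ≤ ε := by
    rw [div_le_iff₀ hkpos]
    have h1 : 1/ε < (K:ℝ) := lt_of_le_of_lt (le_max_left _ _) hK
    have h2 : (K:ℝ) ≤ (k:ℝ) := Nat.cast_le.2 hk
    rw [div_lt_iff₀ hε] at h1
    nlinarith
  have hkδ : 1 / ((k:ℝ) + 1) ≤ δv := by
    rw [div_le_iff₀ hkpos]
    have h1 : 1/δv < (K:ℝ) := lt_of_le_of_lt (le_max_right _ _) hK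
    have h2 : (K:ℝ) ≤ (k:ℝ) := Nat.cast_le.2 hk
    rw [div_lt_iff₀ hδ] at h1
    nlinarith
  refine ⟨{ω | ‖zs k ω - y ω‖ ≤ 1 / (k + 1 : ℝ)}, ?_, ?_, ?_⟩
  · exact measurableSet_le ((hz k).sub hy).measurable.norm measurable_const
  · have hcompl : {ω | ‖zs k ω - y ω‖ ≤ 1 / (k + 1 : ℝ)}ᶜ
        = {ω | 1 / (k + 1 : ℝ) < ‖zs k ω - y ω‖} := by
      ext ω; simp [not_le]
    rw [hcompl]
    exact le_trans (h k) (ENNReal.ofReal_le_ofReal hkε)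
  · filter_upwards [ae_restrict_mem (measurableSet_le ((hz k).sub hy).measurable.norm
      measurable_const)] with ω hω
    exact le_trans hω hkδ

/-- a.e. norm bound from the `L^∞` norm. -/
theorem ae_norm_le_of_norm_le (x : Lp ℂ ⊤ μ) {c : ℝ} (h : ‖x‖ ≤ c) :
    ∀ᵐ ω ∂μ, ‖(x : Ω → ℂ) ω‖ ≤ c := by
  have hc : (0:ℝ) ≤ c := le_trans (norm_nonneg x) h
  have h1 : eLpNorm (x : Ω → ℂ) ⊤ μ ≤ ENNReal.ofReal c := by
    rw [Lp.norm_def] at h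
    exact (ENNReal.le_ofReal_iff_toReal_le (Lp.eLpNorm_ne_top x) hc).2 h
  rw [eLpNorm_exponent_top, eLpNormEssSup] at h1
  filter_upwards [ENNReal.ae_le_essSup (fun ω => (‖(x : Ω → ℂ) ω‖₊ : ℝ≥0∞))] with ω hω
  have h2 := le_trans hω h1
  rwa [← enorm_eq_nnnorm, ← ofReal_norm, ENNReal.ofReal_le_ofReal_iff hc] at h2

theorem norm_toLp_le {f : Ω → ℂ} (hf : MemLp f ⊤ μ) {c : ℝ} (hc : 0 ≤ c)
    (h : ∀ᵐ ω ∂μ, ‖f ω‖ ≤ c) : ‖hf.toLp f‖ ≤ c := by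
  rw [Lp.norm_toLp]
  refine ENNReal.toReal_le_of_le_ofReal hc ?_
  rw [eLpNorm_exponent_top, eLpNormEssSup]
  refine essSup_le_of_ae_le _ ?_
  filter_upwards [h] with ω hω
  rw [← ofReal_norm]
  exact ENNReal.ofReal_le_ofReal hω

end Stmt16


namespace Stmt16

variable {Ω : Type*} [MeasurableSpace Ω] {μ : Measure Ω}

/-- Positive maps with `a 1 ≤ 1` are `L^∞`-contractive up to a factor 2. -/
theorem norm_bound (A : Lp ℂ ⊤ μ →ₗ[ℂ] (Ω →ₘ[μ] ℂ))
    (hpos : ∀ x : Lp ℂ ⊤ μ, (∀ᵐ ω ∂μ, 0 ≤ (x : Ω → ℂ) ω) →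
      ∀ᵐ ω ∂μ, 0 ≤ (A x : Ω → ℂ) ω)
    (hone : ∀ᵐ ω ∂μ,
      (A ((memLp_top_const (1 : ℂ)).toLp (fun _ => (1 : ℂ))) : Ω → ℂ) ω ≤ 1)
    (u : Lp ℂ ⊤ μ) (c : ℝ) (hc : 0 ≤ c) (hu : ∀ᵐ ω ∂μ, ‖(u : Ω → ℂ) ω‖ ≤ c) :
    ∀ᵐ ω ∂μ, ‖(A u : Ω → ℂ) ω‖ ≤ 2 * c := by
  set one : Lp ℂ ⊤ μ := (memLp_top_const (1 : ℂ)).toLp (fun _ => (1 : ℂ)) with hone_def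
  have hone_coe : (one : Ω → ℂ) =ᵐ[μ] fun _ => 1 := MemLp.coeFn_toLp _
  have honepos : ∀ᵐ ω ∂μ, 0 ≤ (A one : Ω → ℂ) ω := by
    refine hpos one ?_
    filter_upwards [hone_coe] with ω hω
    rw [hω]
    exact zero_le_one
  -- key step for "real" elements
  have hreal : ∀ v : Lp ℂ ⊤ μ,
      (∀ᵐ ω ∂μ, ((v : Ω → ℂ) ω).im = 0 ∧ |((v : Ω → ℂ) ω).re| ≤ c) →
      ∀ᵐ ω ∂μ, ((A v : Ω → ℂ) ω).im = 0 ∧ |((A v : Ω → ℂ) ω).re| ≤ c := by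
    intro v hv
    have hsub : ∀ᵐ ω ∂μ, 0 ≤ (((c:ℂ) • one - v : Lp ℂ ⊤ μ) : Ω → ℂ) ω := by
      filter_upwards [Lp.coeFn_sub ((c:ℂ) • one) v, Lp.coeFn_smul (c:ℂ) one,
        hone_coe, hv] with ω h1 h2 h3 h4
      rw [h1]
      simp only [Pi.sub_apply]
      rw [h2]
      simp only [Pi.smul_apply, smul_eq_mul, h3]
      rw [Complex.le_def]
      constructor
      · simp only [Complex.zero_re, Complex.sub_re, Complex.mul_re, Complex.ofReal_re,
          Complex.one_re, Complex.ofReal_im, Complex.one_im]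
        have := abs_le.1 h4.2
        nlinarith [this.2]
      · simp only [Complex.zero_im, Complex.sub_im, Complex.mul_im, Complex.ofReal_re,
          Complex.one_im, Complex.ofReal_im, Complex.one_re, h4.1]
        ring
    have hadd : ∀ᵐ ω ∂μ, 0 ≤ (((c:ℂ) • one + v : Lp ℂ ⊤ μ) : Ω → ℂ) ω := by
      filter_upwards [Lp.coeFn_add ((c:ℂ) • one) v, Lp.coeFn_smul (c:ℂ) one,
        hone_coe, hv] with ω h1 h2 h3 h4
      rw [h1]
      simp only [Pi.add_apply]
      rw [h2]
      simp only [Pi.smul_apply, smul_eq_mul, h3]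
      rw [Complex.le_def]
      constructor
      · simp only [Complex.zero_re, Complex.add_re, Complex.mul_re, Complex.ofReal_re,
          Complex.one_re, Complex.ofReal_im, Complex.one_im]
        have := abs_le.1 h4.2
        nlinarith [this.1]
      · simp only [Complex.zero_im, Complex.add_im, Complex.mul_im, Complex.ofReal_re,
          Complex.one_im, Complex.ofReal_im, Complex.one_re, h4.1]
        ring
    have hs := hpos _ hsub
    have ha := hpos _ hadd
    have hs' : ∀ᵐ ω ∂μ, 0 ≤ (c:ℂ) * (A one : Ω → ℂ) ω - (A v : Ω → ℂ) ω := by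
      have hmap : A ((c:ℂ) • one - v) = (c:ℂ) • A one - A v := by
        rw [map_sub, _root_.map_smul]
      rw [hmap] at hs
      filter_upwards [hs, AEEqFun.coeFn_sub ((c:ℂ) • A one) (A v),
        AEEqFun.coeFn_smul (c:ℂ) (A one)] with ω h1 h2 h3
      rw [h2] at h1
      simp only [Pi.sub_apply] at h1
      rw [h3] at h1
      simpa [smul_eq_mul] using h1
    have ha' : ∀ᵐ ω ∂μ, 0 ≤ (c:ℂ) * (A one : Ω → ℂ) ω + (A v : Ω → ℂ) ω := by
      have hmap : A ((c:ℂ) • one + v) = (c:ℂ) • A one + A v := by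
        rw [map_add, _root_.map_smul]
      rw [hmap] at ha
      filter_upwards [ha, AEEqFun.coeFn_add ((c:ℂ) • A one) (A v),
        AEEqFun.coeFn_smul (c:ℂ) (A one)] with ω h1 h2 h3
      rw [h2] at h1
      simp only [Pi.add_apply] at h1
      rw [h3] at h1
      simpa [smul_eq_mul] using h1
    filter_upwards [hs', ha', honepos, hone] with ω h1 h2 h3 h4
    set t : ℂ := (A one : Ω → ℂ) ω
    set z : ℂ := (A v : Ω → ℂ) ω
    rw [Complex.le_def] at h1 h2 h3 h4
    simp only [Complex.zero_re, Complex.zero_im, Complex.one_re, Complex.one_im] at h1 h2 h3 h4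
    have htim : t.im = 0 := h3.2.symm
    have hre1 : 0 ≤ ((c:ℂ) * t - z).re := h1.1
    have him1 : ((c:ℂ) * t - z).im = 0 := h1.2.symm
    have hre2 : 0 ≤ ((c:ℂ) * t + z).re := h2.1
    simp only [Complex.sub_re, Complex.sub_im, Complex.add_re, Complex.mul_re,
      Complex.mul_im, Complex.ofReal_re, Complex.ofReal_im, htim] at hre1 him1 hre2
    constructor
    · -- z.im = 0
      have : c * t.im = 0 := by rw [htim]; ring
      linarith [him1]
    · rw [abs_le]
      constructor
      · nlinarith [h3.1, h4.1]
      · nlinarith [h3.1, h4.1]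
  -- decompose u into real and imaginary parts
  have hreRe : AEStronglyMeasurable (fun ω => (((u : Ω → ℂ) ω).re : ℂ)) μ :=
    (Complex.continuous_ofReal.comp Complex.continuous_re).comp_aestronglyMeasurable
      (Lp.aestronglyMeasurable u)
  have hreIm : AEStronglyMeasurable (fun ω => (((u : Ω → ℂ) ω).im : ℂ)) μ :=
    (Complex.continuous_ofReal.comp Complex.continuous_im).comp_aestronglyMeasurable
      (Lp.aestronglyMeasurable u)
  have hbRe : ∀ᵐ ω ∂μ, ‖(fun ω => (((u : Ω → ℂ) ω).re : ℂ)) ω‖ ≤ c := by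
    filter_upwards [hu] with ω hω
    simp only [Complex.norm_real]
    exact le_trans (le_trans (Complex.abs_re_le_norm _) (le_of_eq rfl)) hω
  have hbIm : ∀ᵐ ω ∂μ, ‖(fun ω => (((u : Ω → ℂ) ω).im : ℂ)) ω‖ ≤ c := by
    filter_upwards [hu] with ω hω
    simp only [Complex.norm_real]
    exact le_trans (Complex.abs_im_le_norm _) hω
  set u1 : Lp ℂ ⊤ μ := (memLp_top_of_bound hreRe c hbRe).toLp _ with hu1def
  set u2 : Lp ℂ ⊤ μ := (memLp_top_of_bound hreIm c hbIm).toLp _ with hu2def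
  have hu1coe : (u1 : Ω → ℂ) =ᵐ[μ] fun ω => (((u : Ω → ℂ) ω).re : ℂ) := MemLp.coeFn_toLp _
  have hu2coe : (u2 : Ω → ℂ) =ᵐ[μ] fun ω => (((u : Ω → ℂ) ω).im : ℂ) := MemLp.coeFn_toLp _
  have hdecomp : u = u1 + Complex.I • u2 := by
    ext1
    filter_upwards [Lp.coeFn_add u1 (Complex.I • u2), Lp.coeFn_smul Complex.I u2,
      hu1coe, hu2coe] with ω h1 h2 h3 h4
    rw [h1]
    simp only [Pi.add_apply]
    rw [h2]
    simp only [Pi.smul_apply, smul_eq_mul, h3, h4]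
    rw [mul_comm]
    exact (Complex.re_add_im _).symm
  have hA1 := hreal u1 (by
    filter_upwards [hu1coe, hu] with ω h1 h2
    rw [h1]
    refine ⟨Complex.ofReal_im _, ?_⟩
    rw [Complex.ofReal_re]
    exact le_trans (Complex.abs_re_le_norm _) h2)
  have hA2 := hreal u2 (by
    filter_upwards [hu2coe, hu] with ω h1 h2
    rw [h1]
    refine ⟨Complex.ofReal_im _, ?_⟩
    rw [Complex.ofReal_re]
    exact le_trans (Complex.abs_im_le_norm _) h2)
  have hmap : A u = A u1 + Complex.I • A u2 := by
    rw [hdecomp, map_add, _root_.map_smul]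
  rw [hmap]
  filter_upwards [hA1, hA2, AEEqFun.coeFn_add (A u1) (Complex.I • A u2),
    AEEqFun.coeFn_smul Complex.I (A u2)] with ω h1 h2 h3 h4
  rw [h3]
  simp only [Pi.add_apply]
  rw [h4]
  simp only [Pi.smul_apply, smul_eq_mul]
  calc ‖(A u1 : Ω → ℂ) ω + Complex.I * (A u2 : Ω → ℂ) ω‖
      ≤ ‖(A u1 : Ω → ℂ) ω‖ + ‖Complex.I * (A u2 : Ω → ℂ) ω‖ := norm_add_le _ _
    _ ≤ c + c := by
        refine add_le_add ?_ ?_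
        · calc ‖(A u1 : Ω → ℂ) ω‖ ≤ |((A u1 : Ω → ℂ) ω).re| + |((A u1 : Ω → ℂ) ω).im| :=
              Complex.norm_le_abs_re_add_abs_im _
            _ ≤ c := by rw [h1.1]; simpa using h1.2
        · rw [norm_mul, Complex.norm_I, one_mul]
          calc ‖(A u2 : Ω → ℂ) ω‖ ≤ |((A u2 : Ω → ℂ) ω).re| + |((A u2 : Ω → ℂ) ω).im| :=
              Complex.norm_le_abs_re_add_abs_im _
            _ ≤ c := by rw [h2.1]; simpa using h2.2
    _ = 2 * c := by ring

end Stmt16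


namespace Stmt16

variable {Ω : Type*} [MeasurableSpace Ω] {μ : Measure Ω}

/-- Quantitative continuity at `0` of a single sequentially measure-continuous map. -/
theorem single_cont (A : Lp ℂ ⊤ μ →ₗ[ℂ] (Ω →ₘ[μ] ℂ))
    (hA : ∀ (xs : ℕ → Lp ℂ ⊤ μ) (x : Lp ℂ ⊤ μ),
      TendstoMeasTop μ (fun k ω => (xs k : Ω → ℂ) ω) (fun ω => (x : Ω → ℂ) ω) →
      TendstoMeasTop μ (fun k ω => (A (xs k) : Ω → ℂ) ω) (fun ω => (A x : Ω → ℂ) ω))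
    {ε' δ' : ℝ} (hε' : 0 < ε') (hδ' : 0 < δ') :
    ∃ γ : ℝ, 0 < γ ∧ ∀ x : Lp ℂ ⊤ μ,
      μ {ω | γ < ‖(x : Ω → ℂ) ω‖} ≤ ENNReal.ofReal γ →
      μ {ω | δ' < ‖(A x : Ω → ℂ) ω‖} ≤ ENNReal.ofReal ε' := by
  by_contra hcon
  push_neg at hcon
  have hstep : ∀ k : ℕ, ∃ x : Lp ℂ ⊤ μ,
      μ {ω | 1/(k+1:ℝ) < ‖(x : Ω → ℂ) ω‖} ≤ ENNReal.ofReal (1/(k+1:ℝ)) ∧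
      ¬ μ {ω | δ' < ‖(A x : Ω → ℂ) ω‖} ≤ ENNReal.ofReal ε' := by
    intro k
    obtain ⟨x, hx1, hx2⟩ := hcon (1/(k+1:ℝ)) (by positivity)
    exact ⟨x, hx1, by rw [← not_le] at hx2; exact hx2⟩
  choose xs hxs1 hxs2 using hstep
  have htmt : TendstoMeasTop μ (fun k ω => (xs k : Ω → ℂ) ω)
      (fun ω => ((0 : Lp ℂ ⊤ μ) : Ω → ℂ) ω) := by
    refine tmt_of_kf (fun k => (xs k : Ω →ₘ[μ] ℂ).stronglyMeasurable)
      ((0 : Lp ℂ ⊤ μ) : Ω →ₘ[μ] ℂ).stronglyMeasurable (fun k => ?_)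
    unfold KF
    have heq := meas_norm_congr (μ := μ)
      (f := fun ω => (xs k : Ω → ℂ) ω - ((0 : Lp ℂ ⊤ μ) : Ω → ℂ) ω)
      (g := fun ω => (xs k : Ω → ℂ) ω)
      (by filter_upwards [Lp.coeFn_zero (E := ℂ) (p := ⊤) (μ := μ)] with ω h0
          simp only [h0, Pi.zero_apply, sub_zero]) (1/(k+1:ℝ))
    rw [heq]
    exact hxs1 k
  have htm2 := hA xs 0 htmt
  obtain ⟨K, hK⟩ := tmt_meas_le htm2 hε' hδ'
  refine hxs2 K ?_
  have heq := meas_norm_congr (μ := μ)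
    (f := fun ω => (A (xs K) : Ω → ℂ) ω)
    (g := fun ω => (A (xs K) : Ω → ℂ) ω - (A (0 : Lp ℂ ⊤ μ) : Ω → ℂ) ω)
    (by
      have h0 : A (0 : Lp ℂ ⊤ μ) = 0 := map_zero A
      filter_upwards [AEEqFun.coeFn_zero (β := ℂ) (μ := μ)] with ω hω
      rw [h0, hω]
      simp) δ'
  rw [heq]
  exact hK K le_rfl

/-- The "uniform Cauchy tail" sets used in the Baire argument. -/
def EmSet (a : ℕ → (Lp ℂ ⊤ μ) →ₗ[ℂ] (Ω →ₘ[μ] ℂ)) (m : ℕ) (s εb : ℝ) :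
    Set (Lp ℂ ⊤ μ) :=
  {x | ‖x‖ ≤ 1 ∧ μ (⋃ (n : ℕ) (l : ℕ),
    {ω | s < ‖(a (n + m) x : Ω → ℂ) ω - (a (l + m) x : Ω → ℂ) ω‖}) ≤ ENNReal.ofReal εb}

/-- Covering: every ball element lies in some `EmSet`. -/
theorem cover (a : ℕ → (Lp ℂ ⊤ μ) →ₗ[ℂ] (Ω →ₘ[μ] ℂ))
    (ha_conv : ∀ x : Lp ℂ ⊤ μ, ‖x‖ ≤ 1 → ∃ g : Ω → ℂ, Measurable g ∧
      ConvAU μ (fun n ω => (a n x : Ω → ℂ) ω) g)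
    {s εb : ℝ} (hs : 0 < s) (hεb : 0 < εb) (x : Lp ℂ ⊤ μ) (hx : ‖x‖ ≤ 1) :
    ∃ m, x ∈ EmSet a m s εb := by
  obtain ⟨g, hgmeas, hconv⟩ := ha_conv x hx
  obtain ⟨E, hEmeas, hEc, htend⟩ := hconv εb hεb
  have hev : ∀ᶠ n in atTop,
      essSup (fun ω => (‖(a n x : Ω → ℂ) ω - g ω‖₊ : ℝ≥0∞)) (μ.restrict E)
        < ENNReal.ofReal (s/2) :=
    htend.eventually_lt_const (by positivity : (0:ℝ≥0∞) < ENNReal.ofReal (s/2))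
  obtain ⟨m, hm⟩ := eventually_atTop.1 hev
  refine ⟨m, hx, ?_⟩
  -- each pair is small a.e. on E
  have hae : ∀ n l : ℕ, ∀ᵐ ω ∂μ.restrict E,
      ‖(a (n + m) x : Ω → ℂ) ω - (a (l + m) x : Ω → ℂ) ω‖ ≤ s := by
    intro n l
    have h1 := hm (n + m) (Nat.le_add_left m n)
    have h2 := hm (l + m) (Nat.le_add_left m l)
    have hb1 := ENNReal.ae_le_essSup
      (fun ω => (‖(a (n + m) x : Ω → ℂ) ω - g ω‖₊ : ℝ≥0∞)) (μ := μ.restrict E)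
    have hb2 := ENNReal.ae_le_essSup
      (fun ω => (‖(a (l + m) x : Ω → ℂ) ω - g ω‖₊ : ℝ≥0∞)) (μ := μ.restrict E)
    filter_upwards [hb1, hb2] with ω hω1 hω2
    have hc1 : ‖(a (n + m) x : Ω → ℂ) ω - g ω‖ ≤ s/2 := by
      have := le_trans hω1 h1.le
      rwa [← enorm_eq_nnnorm, ← ofReal_norm, ENNReal.ofReal_le_ofReal_iff (by positivity)] at this
    have hc2 : ‖(a (l + m) x : Ω → ℂ) ω - g ω‖ ≤ s/2 := by
      have := le_trans hω2 h2.le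
      rwa [← enorm_eq_nnnorm, ← ofReal_norm, ENNReal.ofReal_le_ofReal_iff (by positivity)] at this
    calc ‖(a (n + m) x : Ω → ℂ) ω - (a (l + m) x : Ω → ℂ) ω‖
        ≤ ‖(a (n + m) x : Ω → ℂ) ω - g ω‖ + ‖g ω - (a (l + m) x : Ω → ℂ) ω‖ := by
          have := norm_add_le ((a (n + m) x : Ω → ℂ) ω - g ω)
            (g ω - (a (l + m) x : Ω → ℂ) ω)
          simpa using this
      _ ≤ s/2 + s/2 := by
          refine add_le_add hc1 ?_
          rwa [norm_sub_rev]
      _ = s := by ring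
  have haeAll : ∀ᵐ ω ∂μ.restrict E, ∀ n l : ℕ,
      ‖(a (n + m) x : Ω → ℂ) ω - (a (l + m) x : Ω → ℂ) ω‖ ≤ s := by
    rw [ae_all_iff]
    intro n
    rw [ae_all_iff]
    exact hae n
  refine le_trans (meas_le_compl hEmeas (restrict_null hEmeas haeAll ?_)) hEc
  intro ω hω
  simp only [Set.mem_iUnion, Set.mem_setOf_eq] at hω
  obtain ⟨n, l, hnl⟩ := hω
  push_neg
  exact ⟨n, l, hnl⟩

end Stmt16


namespace Stmt16

variable {Ω : Type*} [MeasurableSpace Ω] {μ : Measure Ω}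

/-- Sequential closedness of `EmSet` (with level doubling). -/
theorem closedEm (a : ℕ → (Lp ℂ ⊤ μ) →ₗ[ℂ] (Ω →ₘ[μ] ℂ))
    (ha_cont : ∀ n (xs : ℕ → Lp ℂ ⊤ μ) (x : Lp ℂ ⊤ μ),
      TendstoMeasTop μ (fun k ω => (xs k : Ω → ℂ) ω) (fun ω => (x : Ω → ℂ) ω) →
      TendstoMeasTop μ (fun k ω => (a n (xs k) : Ω → ℂ) ω) (fun ω => (a n x : Ω → ℂ) ω))
    {s εb : ℝ} (hs : 0 < s) (hεb : 0 < εb) (m : ℕ) (y : Lp ℂ ⊤ μ) (hy : ‖y‖ ≤ 1)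
    (h : ∀ r : ℝ, 0 < r → ∃ z : Lp ℂ ⊤ μ, ‖z‖ ≤ 1 ∧
      KF μ (fun ω => (z : Ω → ℂ) ω) (fun ω => (y : Ω → ℂ) ω) r ∧ z ∈ EmSet a m s εb) :
    y ∈ EmSet a m (2 * s) εb := by
  refine ⟨hy, ?_⟩
  -- reduce to finite unions
  set S : ℕ → ℕ → Set Ω := fun n l =>
    {ω | 2 * s < ‖(a (n + m) y : Ω → ℂ) ω - (a (l + m) y : Ω → ℂ) ω‖} with hS
  set T : ℕ → Set Ω := fun N => ⋃ n ∈ Finset.range (N+1), ⋃ l ∈ Finset.range (N+1), S n l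
    with hT
  have hUT : (⋃ (n : ℕ) (l : ℕ), S n l) = ⋃ N, T N := by
    ext ω
    simp only [Set.mem_iUnion, hT, Finset.mem_range]
    constructor
    · rintro ⟨n, l, hω⟩
      exact ⟨max n l, n, Nat.lt_succ_of_le (le_max_left _ _), l,
        Nat.lt_succ_of_le (le_max_right _ _), hω⟩
    · rintro ⟨N, n, _, l, _, hω⟩
      exact ⟨n, l, hω⟩
  have hTmono : Monotone T := by
    intro N N' hNN'
    simp only [hT]
    intro ω hω
    simp only [Set.mem_iUnion, Finset.mem_range] at hω ⊢
    obtain ⟨n, hn, l, hl, hω⟩ := hω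
    exact ⟨n, lt_of_lt_of_le hn (by omega), l, lt_of_lt_of_le hl (by omega), hω⟩
  rw [hUT, hTmono.measure_iUnion]
  refine iSup_le fun N => ?_
  -- fixed finite stage: approximate
  refine ENNReal.le_of_forall_pos_le_add fun θ hθ _ => ?_
  -- choose approximating sequence
  have hz : ∀ k : ℕ, ∃ z : Lp ℂ ⊤ μ, ‖z‖ ≤ 1 ∧
      KF μ (fun ω => (z : Ω → ℂ) ω) (fun ω => (y : Ω → ℂ) ω) (1/(k+1:ℝ)) ∧
      z ∈ EmSet a m s εb := fun k => h (1/(k+1:ℝ)) (by positivity)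
  choose z hz1 hz2 hz3 using hz
  have htmt : TendstoMeasTop μ (fun k ω => (z k : Ω → ℂ) ω)
      (fun ω => (y : Ω → ℂ) ω) :=
    tmt_of_kf (fun k => (z k : Ω →ₘ[μ] ℂ).stronglyMeasurable)
      (y : Ω →ₘ[μ] ℂ).stronglyMeasurable hz2
  -- error bounds for indices up to N
  have hθR : (0:ℝ) < (θ:ℝ) / (2 * (N+1)) := by positivity
  have herr : ∀ j : ℕ, ∃ K : ℕ, ∀ k ≥ K,
      μ {ω | s/2 < ‖(a (j + m) (z k) : Ω → ℂ) ω - (a (j + m) y : Ω → ℂ) ω‖}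
        ≤ ENNReal.ofReal ((θ:ℝ) / (2 * (N+1))) := by
    intro j
    exact tmt_meas_le (ha_cont (j + m) z y htmt) hθR (by positivity)
  choose Kf hKf using herr
  set k₀ : ℕ := (Finset.range (N+1)).sup Kf with hk₀
  have hKbound : ∀ j ∈ Finset.range (N+1),
      μ {ω | s/2 < ‖(a (j + m) (z k₀) : Ω → ℂ) ω - (a (j + m) y : Ω → ℂ) ω‖}
        ≤ ENNReal.ofReal ((θ:ℝ) / (2 * (N+1))) := fun j hj =>
    hKf j k₀ (Finset.le_sup hj)
  -- inclusion
  set Err : Set Ω := ⋃ j ∈ Finset.range (N+1),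
    {ω | s/2 < ‖(a (j + m) (z k₀) : Ω → ℂ) ω - (a (j + m) y : Ω → ℂ) ω‖} with hErr
  have hincl : T N ⊆ (⋃ (n : ℕ) (l : ℕ),
      {ω | s < ‖(a (n + m) (z k₀) : Ω → ℂ) ω - (a (l + m) (z k₀) : Ω → ℂ) ω‖}) ∪ Err := by
    intro ω hω
    simp only [hT, Set.mem_iUnion, Finset.mem_range] at hω
    obtain ⟨n, hn, l, hl, hω⟩ := hω
    simp only [hS, Set.mem_setOf_eq] at hω
    by_cases hωE : ω ∈ Err
    · exact Or.inr hωE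
    · left
      simp only [hErr, Set.mem_iUnion, Finset.mem_range, Set.mem_setOf_eq, not_exists,
        not_lt] at hωE
      have he1 := hωE n hn
      have he2 := hωE l hl
      simp only [Set.mem_iUnion, Set.mem_setOf_eq]
      refine ⟨n, l, ?_⟩
      have htri : ‖(a (n + m) y : Ω → ℂ) ω - (a (l + m) y : Ω → ℂ) ω‖ ≤
          ‖(a (n + m) (z k₀) : Ω → ℂ) ω - (a (l + m) (z k₀) : Ω → ℂ) ω‖
          + ‖(a (n + m) (z k₀) : Ω → ℂ) ω - (a (n + m) y : Ω → ℂ) ω‖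
          + ‖(a (l + m) (z k₀) : Ω → ℂ) ω - (a (l + m) y : Ω → ℂ) ω‖ := by
        have h1 : (a (n + m) y : Ω → ℂ) ω - (a (l + m) y : Ω → ℂ) ω =
            ((a (n + m) (z k₀) : Ω → ℂ) ω - (a (l + m) (z k₀) : Ω → ℂ) ω)
            - ((a (n + m) (z k₀) : Ω → ℂ) ω - (a (n + m) y : Ω → ℂ) ω)
            + ((a (l + m) (z k₀) : Ω → ℂ) ω - (a (l + m) y : Ω → ℂ) ω) := by ring
        rw [h1]
        refine le_trans (norm_add_le _ _) ?_
        gcongr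
        exact norm_sub_le _ _
      linarith
  calc μ (T N) ≤ μ ((⋃ (n : ℕ) (l : ℕ),
      {ω | s < ‖(a (n + m) (z k₀) : Ω → ℂ) ω - (a (l + m) (z k₀) : Ω → ℂ) ω‖}) ∪ Err) :=
        measure_mono hincl
    _ ≤ μ (⋃ (n : ℕ) (l : ℕ),
        {ω | s < ‖(a (n + m) (z k₀) : Ω → ℂ) ω - (a (l + m) (z k₀) : Ω → ℂ) ω‖}) + μ Err :=
        measure_union_le _ _
    _ ≤ ENNReal.ofReal εb + ↑θ := by
        refine add_le_add (hz3 k₀).2 ?_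
        calc μ Err ≤ ∑ j ∈ Finset.range (N+1),
            μ {ω | s/2 < ‖(a (j + m) (z k₀) : Ω → ℂ) ω - (a (j + m) y : Ω → ℂ) ω‖} :=
              measure_biUnion_finset_le _ _
          _ ≤ ∑ _j ∈ Finset.range (N+1), ENNReal.ofReal ((θ:ℝ) / (2 * (N+1))) :=
              Finset.sum_le_sum hKbound
          _ = (N+1) • ENNReal.ofReal ((θ:ℝ) / (2 * (N+1))) := by
              rw [Finset.sum_const, Finset.card_range]
          _ ≤ ↑θ := by
              rw [nsmul_eq_mul]
              rw [← ENNReal.ofReal_natCast (N+1), ← ENNReal.ofReal_mul (by positivity)]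
              rw [← ENNReal.ofReal_coe_nnreal]
              refine ENNReal.ofReal_le_ofReal ?_
              have hN1 : (0:ℝ) < (N:ℝ)+1 := by positivity
              have h3 : (0:ℝ) ≤ (θ:ℝ) := θ.2
              rw [show ((N+1 : ℕ):ℝ) = (N:ℝ)+1 by push_cast; ring]
              have h4 : ((N:ℝ)+1) * ((θ:ℝ)/(2*((N:ℝ)+1))) = (θ:ℝ)/2 := by
                field_simp
              rw [h4]
              linarith

end Stmt16


namespace Stmt16

variable {Ω : Type*} [MeasurableSpace Ω] {μ : Measure Ω}

/-- Manual Baire category argument: some `EmSet` contains a Ky Fan ball. -/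
theorem baire (a : ℕ → (Lp ℂ ⊤ μ) →ₗ[ℂ] (Ω →ₘ[μ] ℂ))
    {s εb : ℝ} (hs : 0 < s) (hεb : 0 < εb)
    (hcover : ∀ x : Lp ℂ ⊤ μ, ‖x‖ ≤ 1 → ∃ m, x ∈ EmSet a m s εb)
    (hclosed : ∀ (m : ℕ) (y : Lp ℂ ⊤ μ), ‖y‖ ≤ 1 →
      (∀ r : ℝ, 0 < r → ∃ z : Lp ℂ ⊤ μ, ‖z‖ ≤ 1 ∧
        KF μ (fun ω => (z : Ω → ℂ) ω) (fun ω => (y : Ω → ℂ) ω) r ∧ z ∈ EmSet a m s εb) →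
      y ∈ EmSet a m (2 * s) εb) :
    ∃ (m : ℕ) (x₀ : Lp ℂ ⊤ μ) (ρ₀ : ℝ), ‖x₀‖ ≤ 1 ∧ 0 < ρ₀ ∧
      ∀ y : Lp ℂ ⊤ μ, ‖y‖ ≤ 1 →
        KF μ (fun ω => (y : Ω → ℂ) ω) (fun ω => (x₀ : Ω → ℂ) ω) ρ₀ →
        y ∈ EmSet a m (2 * s) εb := by
  classical
  by_contra hcon
  push_neg at hcon
  -- hcon : ∀ m x₀ ρ₀, ‖x₀‖ ≤ 1 → 0 < ρ₀ → ∃ y, ‖y‖ ≤ 1 ∧ KF .. ∧ y ∉ EmSet a m (2*s) εb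
  have hstep : ∀ (m : ℕ) (yc : Lp ℂ ⊤ μ) (rc : ℝ), ‖yc‖ ≤ 1 → 0 < rc →
      ∃ p : (Lp ℂ ⊤ μ) × ℝ, (‖p.1‖ ≤ 1 ∧ 0 < p.2) ∧ p.2 ≤ rc/4 ∧
        KF μ (fun ω => (p.1 : Ω → ℂ) ω) (fun ω => (yc : Ω → ℂ) ω) (rc/4) ∧
        ∀ z : Lp ℂ ⊤ μ, ‖z‖ ≤ 1 →
          KF μ (fun ω => (z : Ω → ℂ) ω) (fun ω => (p.1 : Ω → ℂ) ω) p.2 →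
          z ∉ EmSet a m s εb := by
    intro m yc rc hyc hrc
    obtain ⟨y', hy'1, hy'KF, hy'not⟩ := hcon m yc (rc/4) hyc (by positivity)
    have hnc : ¬ (∀ r : ℝ, 0 < r → ∃ z : Lp ℂ ⊤ μ, ‖z‖ ≤ 1 ∧
        KF μ (fun ω => (z : Ω → ℂ) ω) (fun ω => (y' : Ω → ℂ) ω) r ∧
        z ∈ EmSet a m s εb) :=
      fun hc => hy'not (hclosed m y' hy'1 hc)
    push_neg at hnc
    obtain ⟨r, hr, hravoid⟩ := hnc
    refine ⟨(y', min r (rc/4)), ⟨hy'1, by positivity⟩, min_le_right _ _, hy'KF, ?_⟩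
    intro z hz hKF hmem
    exact hravoid z hz (hKF.mono (min_le_left _ _)) hmem
  -- recursive construction
  let step : ∀ (m : ℕ), {q : (Lp ℂ ⊤ μ) × ℝ // ‖q.1‖ ≤ 1 ∧ 0 < q.2} →
      {q : (Lp ℂ ⊤ μ) × ℝ // ‖q.1‖ ≤ 1 ∧ 0 < q.2} := fun m p =>
    ⟨(hstep m p.1.1 p.1.2 p.2.1 p.2.2).choose,
     (hstep m p.1.1 p.1.2 p.2.1 p.2.2).choose_spec.1⟩
  let g : ℕ → {q : (Lp ℂ ⊤ μ) × ℝ // ‖q.1‖ ≤ 1 ∧ 0 < q.2} :=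
    fun m => Nat.rec ⟨((0 : Lp ℂ ⊤ μ), 1), by simp, one_pos⟩ step m
  let y : ℕ → Lp ℂ ⊤ μ := fun m => (g m).1.1
  let ρ : ℕ → ℝ := fun m => (g m).1.2
  have hynorm : ∀ m, ‖y m‖ ≤ 1 := fun m => (g m).2.1
  have hρpos : ∀ m, 0 < ρ m := fun m => (g m).2.2
  have hρ0 : ρ 0 = 1 := rfl
  have hprops : ∀ m, ρ (m+1) ≤ ρ m / 4 ∧
      KF μ (fun ω => (y (m+1) : Ω → ℂ) ω) (fun ω => (y m : Ω → ℂ) ω) (ρ m / 4) ∧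
      ∀ z : Lp ℂ ⊤ μ, ‖z‖ ≤ 1 →
        KF μ (fun ω => (z : Ω → ℂ) ω) (fun ω => (y (m+1) : Ω → ℂ) ω) (ρ (m+1)) →
        z ∉ EmSet a m s εb := by
    intro m
    have hspec := (hstep m (y m) (ρ m) (hynorm m) (hρpos m)).choose_spec
    exact ⟨hspec.2.1, hspec.2.2.1, hspec.2.2.2⟩
  have hgeo : ∀ m j, ρ (m + j) ≤ ρ m * (1/4)^j := by
    intro m j
    induction j with
    | zero => simp
    | succ j ih =>
      have h1 := (hprops (m + j)).1
      calc ρ (m + (j+1)) = ρ ((m + j) + 1) := by ring_nf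
        _ ≤ ρ (m + j) / 4 := h1
        _ ≤ (ρ m * (1/4)^j) / 4 := by linarith
        _ = ρ m * (1/4)^(j+1) := by ring
  have hρle : ∀ m, ρ m ≤ (1/4:ℝ)^m := by
    intro m
    have := hgeo 0 m
    rw [Nat.zero_add] at this
    simpa [hρ0] using this
  -- the exceptional sets
  let D : ℕ → Set Ω := fun m =>
    {ω | ρ m / 4 < ‖(y (m+1) : Ω → ℂ) ω - (y m : Ω → ℂ) ω‖}
  have hD : ∀ m, μ (D m) ≤ ENNReal.ofReal (ρ m / 4) := fun m => (hprops m).2.1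
  let Ns : ℕ → Set Ω := fun m => ⋃ j, D (m + j)
  have hNs : ∀ m, μ (Ns m) ≤ ENNReal.ofReal (ρ m) := by
    intro m
    calc μ (Ns m) ≤ ∑' j, μ (D (m+j)) := measure_iUnion_le _
      _ ≤ ∑' j : ℕ, ENNReal.ofReal (ρ m / 4 * (1/4 : ℝ)^j) := by
          refine ENNReal.tsum_le_tsum fun j => le_trans (hD (m+j)) ?_
          refine ENNReal.ofReal_le_ofReal ?_
          have := hgeo m j
          linarith
      _ = ENNReal.ofReal (ρ m / 4 * (4/3 : ℝ)) := by
          rw [← ENNReal.ofReal_tsum_of_nonneg (fun j => by have := hρpos m; positivity)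
            ((summable_geometric_of_lt_one (by norm_num) (by norm_num)).mul_left _)]
          congr 1
          rw [tsum_mul_left, tsum_geometric_of_lt_one (by norm_num) (by norm_num)]
          norm_num
      _ ≤ ENNReal.ofReal (ρ m) := by
          refine ENNReal.ofReal_le_ofReal ?_
          have := hρpos m
          linarith
  have hNmono : ∀ M M' : ℕ, M ≤ M' → Ns M' ⊆ Ns M := by
    intro M M' hMM' ω hω
    rw [Set.mem_iUnion] at hω ⊢
    obtain ⟨j, hj⟩ := hω
    exact ⟨(M' - M) + j, by rwa [show M + ((M' - M) + j) = M' + j by omega]⟩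
  let Nall : Set Ω := ⋂ m, Ns m
  have hNall : μ Nall = 0 := by
    refine le_antisymm ?_ zero_le
    have hb : ∀ m : ℕ, μ Nall ≤ ENNReal.ofReal ((1/4:ℝ)^m) := fun m =>
      le_trans (measure_mono (Set.iInter_subset _ m))
        (le_trans (hNs m) (ENNReal.ofReal_le_ofReal (hρle m)))
    have htnd : Tendsto (fun m : ℕ => ENNReal.ofReal ((1/4:ℝ)^m)) atTop (𝓝 0) := by
      have h0 : (0:ℝ≥0∞) = ENNReal.ofReal 0 := by simp
      rw [h0]
      exact (ENNReal.continuous_ofReal.tendsto 0).comp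
        (tendsto_pow_atTop_nhds_zero_of_lt_one (by norm_num) (by norm_num))
    exact ge_of_tendsto' htnd hb
  -- pointwise Cauchy bounds
  have hptb : ∀ m, ∀ ω, ω ∉ Ns m → ∀ k,
      ‖(y (m+k) : Ω → ℂ) ω - (y m : Ω → ℂ) ω‖ ≤ (ρ m - ρ (m+k))/3 := by
    intro m ω hω k
    induction k with
    | zero => simp
    | succ k ih =>
      have hd : ‖(y (m+k+1) : Ω → ℂ) ω - (y (m+k) : Ω → ℂ) ω‖ ≤ ρ (m+k)/4 := by
        have hnot : ω ∉ D (m+k) := fun hc => hω (Set.mem_iUnion.2 ⟨k, hc⟩)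
        simpa [D, Set.mem_setOf_eq, not_lt] using hnot
      have h1 := (hprops (m+k)).1
      have htri : ‖(y (m+(k+1)) : Ω → ℂ) ω - (y m : Ω → ℂ) ω‖ ≤
          ‖(y (m+k+1) : Ω → ℂ) ω - (y (m+k) : Ω → ℂ) ω‖ +
          ‖(y (m+k) : Ω → ℂ) ω - (y m : Ω → ℂ) ω‖ := by
        have heq : (y (m+(k+1)) : Ω → ℂ) ω - (y m : Ω → ℂ) ω =
            ((y (m+k+1) : Ω → ℂ) ω - (y (m+k) : Ω → ℂ) ω) +
            ((y (m+k) : Ω → ℂ) ω - (y m : Ω → ℂ) ω) := by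
          rw [show m+(k+1) = m+k+1 by omega]
          ring
        rw [heq]
        exact norm_add_le _ _
      have hrw : ρ (m + (k+1)) = ρ (m+k+1) := by rw [show m+(k+1) = m+k+1 by omega]
      rw [hrw]
      calc ‖(y (m+(k+1)) : Ω → ℂ) ω - (y m : Ω → ℂ) ω‖
          ≤ ρ (m+k)/4 + (ρ m - ρ (m+k))/3 := by
            refine le_trans htri (add_le_add hd ih)
        _ ≤ (ρ m - ρ (m+k+1))/3 := by linarith
  -- pointwise convergence off Nall
  have hconv : ∀ ω, ω ∉ Nall →
      ∃ c : ℂ, Tendsto (fun k => (y k : Ω → ℂ) ω) atTop (𝓝 c) := by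
    intro ω hω
    have hM : ∃ M, ω ∉ Ns M := by
      by_contra hM
      push_neg at hM
      exact hω (Set.mem_iInter.2 hM)
    obtain ⟨M, hM⟩ := hM
    refine cauchySeq_tendsto_of_complete ?_
    rw [Metric.cauchySeq_iff']
    intro εr hεr
    obtain ⟨j, hj⟩ := exists_pow_lt_of_lt_one (by linarith : (0:ℝ) < 3*εr)
      (by norm_num : (1/4:ℝ) < 1)
    refine ⟨max M j, fun n hn => ?_⟩
    set M' := max M j with hM'
    have hωM' : ω ∉ Ns M' := fun hc => hM (hNmono M M' (le_max_left _ _) hc)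
    have hb := hptb M' ω hωM' (n - M')
    rw [show M' + (n - M') = n by omega] at hb
    have hρM' : ρ M' ≤ (1/4:ℝ)^j :=
      le_trans (hρle M') (pow_le_pow_of_le_one (by norm_num) (by norm_num)
        (le_max_right M j))
    calc dist ((y n : Ω → ℂ) ω) ((y M' : Ω → ℂ) ω)
        = ‖(y n : Ω → ℂ) ω - (y M' : Ω → ℂ) ω‖ := dist_eq_norm _ _
      _ ≤ (ρ M' - ρ n)/3 := hb
      _ < εr := by
          have h1 := hρpos n
          linarith
  let glim : Ω → ℂ := fun ω =>
    if h : ∃ c : ℂ, Tendsto (fun k => (y k : Ω → ℂ) ω) atTop (𝓝 c) then h.choose else 0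
  have htendg : ∀ ω, ω ∉ Nall →
      Tendsto (fun k => (y k : Ω → ℂ) ω) atTop (𝓝 (glim ω)) := by
    intro ω hω
    have hex := hconv ω hω
    show Tendsto _ _ (𝓝 (dite _ _ _))
    rw [dif_pos hex]
    exact hex.choose_spec
  have haeNall : ∀ᵐ ω ∂μ, ω ∉ Nall := by
    rw [ae_iff]
    simpa using hNall
  have hmeasg : AEStronglyMeasurable glim μ :=
    aestronglyMeasurable_of_tendsto_ae atTop (fun k => Lp.aestronglyMeasurable (y k))
      (by filter_upwards [haeNall] with ω hω; exact htendg ω hω)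
  have hgbound : ∀ᵐ ω ∂μ, ‖glim ω‖ ≤ 1 := by
    have hball : ∀ᵐ ω ∂μ, ∀ k, ‖(y k : Ω → ℂ) ω‖ ≤ 1 :=
      ae_all_iff.2 fun k => ae_norm_le_of_norm_le (y k) (hynorm k)
    filter_upwards [hball, haeNall] with ω h1 h2
    exact le_of_tendsto (htendg ω h2).norm (Filter.Eventually.of_forall fun k => h1 k)
  let xstar : Lp ℂ ⊤ μ := (memLp_top_of_bound hmeasg 1 hgbound).toLp glim
  have hxstar_norm : ‖xstar‖ ≤ 1 := norm_toLp_le _ one_pos.le hgbound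
  have hxstar_coe : (xstar : Ω → ℂ) =ᵐ[μ] glim := MemLp.coeFn_toLp _
  have hxKF : ∀ m, KF μ (fun ω => (xstar : Ω → ℂ) ω) (fun ω => (y m : Ω → ℂ) ω) (ρ m) := by
    intro m
    have hglim : KF μ glim (fun ω => (y m : Ω → ℂ) ω) (ρ m) := by
      unfold KF
      have hsub : {ω | ρ m < ‖glim ω - (y m : Ω → ℂ) ω‖} ⊆ Ns m ∪ Nall := by
        intro ω hω
        simp only [Set.mem_setOf_eq] at hω
        by_cases h1 : ω ∈ Nall
        · exact Or.inr h1
        by_cases h2 : ω ∈ Ns m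
        · exact Or.inl h2
        exfalso
        have htd : Tendsto (fun k => (y (m+k) : Ω → ℂ) ω) atTop (𝓝 (glim ω)) := by
          have := (htendg ω h1).comp (tendsto_add_atTop_nat m)
          simpa [Function.comp_def, Nat.add_comm] using this
        have hn : Tendsto (fun k => ‖(y (m+k) : Ω → ℂ) ω - (y m : Ω → ℂ) ω‖) atTop
            (𝓝 ‖glim ω - (y m : Ω → ℂ) ω‖) := (htd.sub tendsto_const_nhds).norm
        have hle : ‖glim ω - (y m : Ω → ℂ) ω‖ ≤ ρ m / 3 :=
          le_of_tendsto hn (Filter.Eventually.of_forall fun k =>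
            le_trans (hptb m ω h2 k) (by have := hρpos (m+k); linarith))
        have := hρpos m
        linarith
      calc μ {ω | ρ m < ‖glim ω - (y m : Ω → ℂ) ω‖} ≤ μ (Ns m ∪ Nall) := measure_mono hsub
        _ ≤ μ (Ns m) + μ Nall := measure_union_le _ _
        _ = μ (Ns m) := by rw [hNall, add_zero]
        _ ≤ ENNReal.ofReal (ρ m) := hNs m
    exact KF.congr hxstar_coe.symm EventuallyEq.rfl hglim
  obtain ⟨m₀, hm₀⟩ := hcover xstar hxstar_norm
  exact (hprops m₀).2.2 xstar hxstar_norm (hxKF (m₀+1)) hm₀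

end Stmt16


open Stmt16 in
/-- Theorem 3.6 (commutative): let `a_n : L^∞ → L⁰` be positive linear maps with
`a_n(1) ≤ 1` a.e., each sequentially continuous in the measure topology. If `(a_n(x))_n`
converges almost uniformly for every `x` in the unit ball of `L^∞`, then `(a_n)` is
uniformly equicontinuous at `0` on the unit ball. -/
theorem stmt_16 {Ω : Type*} [MeasurableSpace Ω] (μ : Measure Ω) [SigmaFinite μ]
    (a : ℕ → (Lp ℂ ⊤ μ) →ₗ[ℂ] (Ω →ₘ[μ] ℂ))
    (ha_pos : ∀ n (x : Lp ℂ ⊤ μ), (∀ᵐ ω ∂μ, 0 ≤ (x : Ω → ℂ) ω) →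
      ∀ᵐ ω ∂μ, 0 ≤ (a n x : Ω → ℂ) ω)
    (ha_one : ∀ n, ∀ᵐ ω ∂μ,
      (a n ((memLp_top_const (1 : ℂ)).toLp (fun _ => (1 : ℂ))) : Ω → ℂ) ω ≤ 1)
    (ha_cont : ∀ n (xs : ℕ → Lp ℂ ⊤ μ) (x : Lp ℂ ⊤ μ),
      TendstoMeasTop μ (fun k ω => (xs k : Ω → ℂ) ω) (fun ω => (x : Ω → ℂ) ω) →
      TendstoMeasTop μ (fun k ω => (a n (xs k) : Ω → ℂ) ω) (fun ω => (a n x : Ω → ℂ) ω))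
    (ha_conv : ∀ x : Lp ℂ ⊤ μ, ‖x‖ ≤ 1 → ∃ g : Ω → ℂ, Measurable g ∧
      ConvAU μ (fun n ω => (a n x : Ω → ℂ) ω) g) :
    UnifEquicont μ (fun n x => a n x) {x : Lp ℂ ⊤ μ | ‖x‖ ≤ 1} := by
 
  classical
  intro ε δ hε hδ
  set s : ℝ := δ/8 with hsdef
  set εb : ℝ := ε/4 with hεbdef
  have hs : 0 < s := by positivity
  have hεb : 0 < εb := by positivity
  -- Baire
  obtain ⟨m, x₀, ρ₀, hx₀norm, hρ₀, hball⟩ := baire a hs hεb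
    (fun x hx => cover a ha_conv hs hεb x hx)
    (fun m y hy hcl => closedEm a ha_cont hs hεb m y hy hcl)
  -- single map continuity for indices ≤ m
  have hD1 : ∀ n : ℕ, ∃ γ : ℝ, 0 < γ ∧ ∀ x : Lp ℂ ⊤ μ,
      μ {ω | γ < ‖(x : Ω → ℂ) ω‖} ≤ ENNReal.ofReal γ →
      μ {ω | δ/4 < ‖(a n x : Ω → ℂ) ω‖} ≤ ENNReal.ofReal (ε/(4*(m+1))) := by
    intro n
    exact single_cont (a n) (ha_cont n) (by positivity) (by positivity)
  choose γf hγfpos hγfspec using hD1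
  set γ₀ : ℝ := (Finset.range (m+1)).inf' ⟨0, by simp⟩ γf with hγ₀def
  have hγ₀pos : 0 < γ₀ := by
    rw [hγ₀def]
    exact (Finset.lt_inf'_iff _).2 fun n _ => hγfpos n
  set γ : ℝ := min (min ρ₀ (δ/8)) γ₀ with hγdef
  have hγpos : 0 < γ := by
    rw [hγdef]
    exact lt_min (lt_min hρ₀ (by positivity)) hγ₀pos
  have hγρ₀ : γ ≤ ρ₀ := le_trans (min_le_left _ _) (min_le_left _ _)
  have hγδ : γ ≤ δ/8 := le_trans (min_le_left _ _) (min_le_right _ _)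
  have hγγ₀ : γ ≤ γ₀ := min_le_right _ _
  refine ⟨γ, hγpos, ?_⟩
  rintro x hx ⟨F, hFmeas, hFc, hFae⟩
  simp only [Set.mem_setOf_eq] at hx
  -- the truncation set
  set Fx : Set Ω := {ω | ‖(x : Ω → ℂ) ω‖ ≤ γ} with hFxdef
  have hFxmeas : MeasurableSet Fx :=
    measurableSet_le (x : Ω →ₘ[μ] ℂ).stronglyMeasurable.measurable.norm measurable_const
  have hFxc : μ Fxᶜ ≤ ENNReal.ofReal γ := by
    have hcompl : Fxᶜ = {ω | γ < ‖(x : Ω → ℂ) ω‖} := by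
      ext ω; simp [hFxdef, not_le]
    rw [hcompl]
    exact le_trans (meas_gt_le_of_restrict hFmeas hFae) hFc
  -- glue elements
  have hx₀ae := ae_norm_le_of_norm_le x₀ hx₀norm
  have hxae := ae_norm_le_of_norm_le x hx
  have hyymem : MemLp (Fx.piecewise (fun ω => (x₀ : Ω → ℂ) ω) (fun ω => (x : Ω → ℂ) ω)) ⊤ μ := by
    refine memLp_top_of_bound (StronglyMeasurable.aestronglyMeasurable ?_) 1 ?_
    · exact StronglyMeasurable.piecewise hFxmeas
        (x₀ : Ω →ₘ[μ] ℂ).stronglyMeasurable (x : Ω →ₘ[μ] ℂ).stronglyMeasurable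
    · filter_upwards [hx₀ae, hxae] with ω h1 h2
      by_cases hω : ω ∈ Fx
      · rwa [Set.piecewise_eq_of_mem _ _ _ hω]
      · rwa [Set.piecewise_eq_of_notMem _ _ _ hω]
  have hy'mem : MemLp (Fx.piecewise (fun ω => (x₀ : Ω → ℂ) ω) (fun _ => (0:ℂ))) ⊤ μ := by
    refine memLp_top_of_bound (StronglyMeasurable.aestronglyMeasurable ?_) 1 ?_
    · exact StronglyMeasurable.piecewise hFxmeas
        (x₀ : Ω →ₘ[μ] ℂ).stronglyMeasurable stronglyMeasurable_const
    · filter_upwards [hx₀ae] with ω h1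
      by_cases hω : ω ∈ Fx
      · rwa [Set.piecewise_eq_of_mem _ _ _ hω]
      · rw [Set.piecewise_eq_of_notMem _ _ _ hω]
        simp
  set yy : Lp ℂ ⊤ μ := hyymem.toLp _ with hyydef
  set y'y : Lp ℂ ⊤ μ := hy'mem.toLp _ with hy'def
  have hyycoe : (yy : Ω → ℂ) =ᵐ[μ]
      Fx.piecewise (fun ω => (x₀ : Ω → ℂ) ω) (fun ω => (x : Ω → ℂ) ω) := MemLp.coeFn_toLp _
  have hy'coe : (y'y : Ω → ℂ) =ᵐ[μ]
      Fx.piecewise (fun ω => (x₀ : Ω → ℂ) ω) (fun _ => (0:ℂ)) := MemLp.coeFn_toLp _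
  have hyynorm : ‖yy‖ ≤ 1 := norm_toLp_le hyymem one_pos.le (by
    filter_upwards [hx₀ae, hxae] with ω h1 h2
    by_cases hω : ω ∈ Fx
    · rwa [Set.piecewise_eq_of_mem _ _ _ hω]
    · rwa [Set.piecewise_eq_of_notMem _ _ _ hω])
  have hy'norm : ‖y'y‖ ≤ 1 := norm_toLp_le hy'mem one_pos.le (by
    filter_upwards [hx₀ae] with ω h1
    by_cases hω : ω ∈ Fx
    · rwa [Set.piecewise_eq_of_mem _ _ _ hω]
    · rw [Set.piecewise_eq_of_notMem _ _ _ hω]; simp)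
  -- Ky Fan closeness to x₀
  have hKFyy : KF μ (fun ω => (yy : Ω → ℂ) ω) (fun ω => (x₀ : Ω → ℂ) ω) ρ₀ := by
    unfold KF
    have hcongr := meas_norm_congr (μ := μ)
      (f := fun ω => (yy : Ω → ℂ) ω - (x₀ : Ω → ℂ) ω)
      (g := fun ω => Fx.piecewise (fun ω => (x₀ : Ω → ℂ) ω) (fun ω => (x : Ω → ℂ) ω) ω
        - (x₀ : Ω → ℂ) ω)
      (by filter_upwards [hyycoe] with ω h1; rw [h1]) ρ₀
    rw [hcongr]
    refine le_trans (le_trans (measure_mono ?_) hFxc) (ENNReal.ofReal_le_ofReal hγρ₀)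
    intro ω hω
    simp only [Set.mem_setOf_eq] at hω
    by_contra hmem
    simp only [Set.mem_compl_iff, not_not] at hmem
    rw [Set.piecewise_eq_of_mem _ _ _ hmem, sub_self, norm_zero] at hω
    linarith
  have hKFy' : KF μ (fun ω => (y'y : Ω → ℂ) ω) (fun ω => (x₀ : Ω → ℂ) ω) ρ₀ := by
    unfold KF
    have hcongr := meas_norm_congr (μ := μ)
      (f := fun ω => (y'y : Ω → ℂ) ω - (x₀ : Ω → ℂ) ω)
      (g := fun ω => Fx.piecewise (fun ω => (x₀ : Ω → ℂ) ω) (fun _ => (0:ℂ)) ω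
        - (x₀ : Ω → ℂ) ω)
      (by filter_upwards [hy'coe] with ω h1; rw [h1]) ρ₀
    rw [hcongr]
    refine le_trans (le_trans (measure_mono ?_) hFxc) (ENNReal.ofReal_le_ofReal hγρ₀)
    intro ω hω
    simp only [Set.mem_setOf_eq] at hω
    by_contra hmem
    simp only [Set.mem_compl_iff, not_not] at hmem
    rw [Set.piecewise_eq_of_mem _ _ _ hmem, sub_self, norm_zero] at hω
    linarith
  have hEmy := hball yy hyynorm hKFyy
  have hEmy' := hball y'y hy'norm hKFy'
  -- the difference element
  set ww : Lp ℂ ⊤ μ := yy - y'y with hwwdef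
  have hwwprop : ∀ᵐ ω ∂μ, (ω ∈ Fx → (ww : Ω → ℂ) ω = 0) ∧
      (ω ∉ Fx → (ww : Ω → ℂ) ω = (x : Ω → ℂ) ω) := by
    filter_upwards [Lp.coeFn_sub yy y'y, hyycoe, hy'coe] with ω h1 h2 h3
    have hval : (ww : Ω → ℂ) ω = (yy : Ω → ℂ) ω - (y'y : Ω → ℂ) ω := by
      rw [hwwdef]; rw [h1]; rfl
    constructor
    · intro hω
      rw [hval, h2, h3, Set.piecewise_eq_of_mem _ _ _ hω,
        Set.piecewise_eq_of_mem _ _ _ hω, sub_self]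
    · intro hω
      rw [hval, h2, h3, Set.piecewise_eq_of_notMem _ _ _ hω,
        Set.piecewise_eq_of_notMem _ _ _ hω, sub_zero]
  -- small image of ww under a n for n ≤ m
  have hwwsmall : ∀ c : ℝ, 0 < c → γ ≤ c →
      μ {ω | c < ‖(ww : Ω → ℂ) ω‖} ≤ ENNReal.ofReal c := by
    intro c hc hγc
    refine le_trans (meas_le_compl hFxmeas (restrict_null hFxmeas
      (p := fun ω => ¬ (c < ‖(ww : Ω → ℂ) ω‖)) ?_ ?_)) (le_trans hFxc
      (ENNReal.ofReal_le_ofReal hγc))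
    · filter_upwards [ae_restrict_of_ae hwwprop, ae_restrict_mem hFxmeas] with ω h1 h2
      rw [(h1.1 h2), norm_zero]
      exact not_lt.2 hc.le
    · intro ω hω
      simpa using hω
  have hUdw : ∀ n ∈ Finset.range (m+1),
      μ {ω | δ/4 < ‖(a n ww : Ω → ℂ) ω‖} ≤ ENNReal.ofReal (ε/(4*(m+1))) := by
    intro n hn
    refine hγfspec n ww (hwwsmall (γf n) (hγfpos n) ?_)
    exact le_trans hγγ₀ (Finset.inf'_le _ hn)
  -- bound a n (x - ww)
  have hvb : ∀ᵐ ω ∂μ, ‖((x - ww : Lp ℂ ⊤ μ) : Ω → ℂ) ω‖ ≤ γ := by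
    filter_upwards [Lp.coeFn_sub x ww, hwwprop] with ω h1 h2
    rw [h1]
    simp only [Pi.sub_apply]
    by_cases hω : ω ∈ Fx
    · rw [h2.1 hω, sub_zero]
      exact hω
    · rw [h2.2 hω, sub_self, norm_zero]
      exact hγpos.le
  have hAv : ∀ᵐ ω ∂μ, ∀ n, ‖(a n (x - ww) : Ω → ℂ) ω‖ ≤ 2*γ :=
    ae_all_iff.2 fun n => norm_bound (a n) (ha_pos n) (ha_one n) (x - ww) γ hγpos.le hvb
  -- a.e. linearity identities
  have haddid : ∀ᵐ ω ∂μ, ∀ n,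
      (a n x : Ω → ℂ) ω = (a n (x - ww) : Ω → ℂ) ω + (a n ww : Ω → ℂ) ω := by
    rw [ae_all_iff]
    intro n
    have hmap : a n x = a n (x - ww) + a n ww := by
      rw [← map_add]
      congr 1
      abel
    have hcoe : ((a n x : Ω →ₘ[μ] ℂ) : Ω → ℂ)
        = ((a n (x - ww) + a n ww : Ω →ₘ[μ] ℂ) : Ω → ℂ) := by rw [hmap]
    filter_upwards [AEEqFun.coeFn_add (a n (x - ww)) (a n ww)] with ω h1
    rw [hcoe, h1]
    rfl
  have hsubid : ∀ᵐ ω ∂μ, ∀ n,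
      (a n ww : Ω → ℂ) ω = (a n yy : Ω → ℂ) ω - (a n y'y : Ω → ℂ) ω := by
    rw [ae_all_iff]
    intro n
    have hmap : a n ww = a n yy - a n y'y := by
      rw [hwwdef, map_sub]
    have hcoe : ((a n ww : Ω →ₘ[μ] ℂ) : Ω → ℂ)
        = ((a n yy - a n y'y : Ω →ₘ[μ] ℂ) : Ω → ℂ) := by rw [hmap]
    filter_upwards [AEEqFun.coeFn_sub (a n yy) (a n y'y)] with ω h1
    rw [hcoe, h1]
    rfl
  -- the bad sets
  set Uy : Set Ω := ⋃ (n : ℕ) (l : ℕ),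
    {ω | 2*s < ‖(a (n + m) yy : Ω → ℂ) ω - (a (l + m) yy : Ω → ℂ) ω‖} with hUydef
  set Uy' : Set Ω := ⋃ (n : ℕ) (l : ℕ),
    {ω | 2*s < ‖(a (n + m) y'y : Ω → ℂ) ω - (a (l + m) y'y : Ω → ℂ) ω‖} with hUy'def
  set Udw : Set Ω := ⋃ n ∈ Finset.range (m+1),
    {ω | δ/4 < ‖(a n ww : Ω → ℂ) ω‖} with hUdwdef
  have hUymeas : MeasurableSet Uy := by
    refine MeasurableSet.iUnion fun n => MeasurableSet.iUnion fun l => ?_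
    exact measurableSet_lt measurable_const
      (((a (n + m) yy : Ω →ₘ[μ] ℂ).stronglyMeasurable.sub
        (a (l + m) yy : Ω →ₘ[μ] ℂ).stronglyMeasurable).measurable.norm)
  have hUy'meas : MeasurableSet Uy' := by
    refine MeasurableSet.iUnion fun n => MeasurableSet.iUnion fun l => ?_
    exact measurableSet_lt measurable_const
      (((a (n + m) y'y : Ω →ₘ[μ] ℂ).stronglyMeasurable.sub
        (a (l + m) y'y : Ω →ₘ[μ] ℂ).stronglyMeasurable).measurable.norm)
  have hUdwmeas : MeasurableSet Udw := by
    refine MeasurableSet.biUnion (Finset.range (m+1)).countable_toSet fun n _ => ?_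
    exact measurableSet_lt measurable_const
      ((a n ww : Ω →ₘ[μ] ℂ).stronglyMeasurable.measurable.norm)
  -- null set of a.e. facts
  set N₀ : Set Ω := {ω | ¬ ((∀ n, ‖(a n (x - ww) : Ω → ℂ) ω‖ ≤ 2*γ) ∧
      (∀ n, (a n x : Ω → ℂ) ω = (a n (x - ww) : Ω → ℂ) ω + (a n ww : Ω → ℂ) ω) ∧
      (∀ n, (a n ww : Ω → ℂ) ω = (a n yy : Ω → ℂ) ω - (a n y'y : Ω → ℂ) ω))} with hN₀def
  have hN₀null : μ N₀ = 0 := by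
    have hconj : ∀ᵐ ω ∂μ, (∀ n, ‖(a n (x - ww) : Ω → ℂ) ω‖ ≤ 2*γ) ∧
        (∀ n, (a n x : Ω → ℂ) ω = (a n (x - ww) : Ω → ℂ) ω + (a n ww : Ω → ℂ) ω) ∧
        (∀ n, (a n ww : Ω → ℂ) ω = (a n yy : Ω → ℂ) ω - (a n y'y : Ω → ℂ) ω) := by
      filter_upwards [hAv, haddid, hsubid] with ω h1 h2 h3
      exact ⟨h1, h2, h3⟩
    exact hconj
  set G : Set Ω := (Uy ∪ Uy' ∪ Udw ∪ toMeasurable μ N₀)ᶜ with hGdef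
  have hGmeas : MeasurableSet G :=
    (((hUymeas.union hUy'meas).union hUdwmeas).union (measurableSet_toMeasurable μ N₀)).compl
  refine ⟨G, hGmeas, ?_, ?_⟩
  · -- measure bound
    rw [hGdef, compl_compl]
    have hquarter : ENNReal.ofReal εb = ENNReal.ofReal (ε/4) := by rw [hεbdef]
    calc μ (Uy ∪ Uy' ∪ Udw ∪ toMeasurable μ N₀)
        ≤ μ (Uy ∪ Uy' ∪ Udw) + μ (toMeasurable μ N₀) := measure_union_le _ _
      _ = μ (Uy ∪ Uy' ∪ Udw) := by rw [measure_toMeasurable, hN₀null, add_zero]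
      _ ≤ μ (Uy ∪ Uy') + μ Udw := measure_union_le _ _
      _ ≤ (μ Uy + μ Uy') + μ Udw := add_le_add (measure_union_le _ _) le_rfl
      _ ≤ (ENNReal.ofReal (ε/4) + ENNReal.ofReal (ε/4)) + ENNReal.ofReal (ε/4) := by
          refine add_le_add (add_le_add ?_ ?_) ?_
          · exact hquarter ▸ hEmy.2
          · exact hquarter ▸ hEmy'.2
          · calc μ Udw ≤ ∑ n ∈ Finset.range (m+1),
                μ {ω | δ/4 < ‖(a n ww : Ω → ℂ) ω‖} := measure_biUnion_finset_le _ _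
              _ ≤ ∑ _n ∈ Finset.range (m+1), ENNReal.ofReal (ε/(4*(m+1))) :=
                  Finset.sum_le_sum hUdw
              _ = (m+1) • ENNReal.ofReal (ε/(4*(m+1))) := by
                  rw [Finset.sum_const, Finset.card_range]
              _ ≤ ENNReal.ofReal (ε/4) := by
                  rw [nsmul_eq_mul, ← ENNReal.ofReal_natCast (m+1),
                    ← ENNReal.ofReal_mul (by positivity)]
                  refine ENNReal.ofReal_le_ofReal ?_
                  have hm1 : (0:ℝ) < (m:ℝ)+1 := by positivity
                  have hfs : ((m:ℝ)+1) * (ε/(4*((m:ℝ)+1))) = ε/4 := by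
                    field_simp
                  rw [show ((m+1 : ℕ):ℝ) = (m:ℝ)+1 by push_cast; ring, hfs]
      _ ≤ ENNReal.ofReal ε := by
          rw [← ENNReal.ofReal_add (by positivity) (by positivity),
            ← ENNReal.ofReal_add (by positivity) (by positivity)]
          refine ENNReal.ofReal_le_ofReal ?_
          linarith
  · -- essSup bound
    intro n
    refine essSup_le_of_ae_le _ ?_
    filter_upwards [ae_restrict_mem hGmeas] with ω hωG
    have hωG' : ω ∉ Uy ∧ ω ∉ Uy' ∧ ω ∉ Udw ∧ ω ∉ toMeasurable μ N₀ := by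
      rw [hGdef] at hωG
      simp only [Set.mem_compl_iff, Set.mem_union, not_or] at hωG
      exact ⟨hωG.1.1.1, hωG.1.1.2, hωG.1.2, hωG.2⟩
    have hωN₀ : ω ∉ N₀ := fun hc => hωG'.2.2.2 (subset_toMeasurable μ N₀ hc)
    rw [hN₀def, Set.mem_setOf_eq, not_not] at hωN₀
    obtain ⟨hv, hadd, hsub⟩ := hωN₀
    have hUdwbound : ∀ j ∈ Finset.range (m+1), ‖(a j ww : Ω → ℂ) ω‖ ≤ δ/4 := by
      intro j hj
      have := hωG'.2.2.1
      rw [hUdwdef] at this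
      simp only [Set.mem_iUnion, Set.mem_setOf_eq, not_exists, not_lt] at this
      exact this j hj
    have hnww : ‖(a n ww : Ω → ℂ) ω‖ ≤ 3*δ/4 := by
      by_cases hnm : n ≤ m
      · exact le_trans (hUdwbound n (Finset.mem_range.2 (Nat.lt_succ_of_le hnm)))
          (by linarith)
      · push_neg at hnm
        have hUyb : ‖(a n yy : Ω → ℂ) ω - (a m yy : Ω → ℂ) ω‖ ≤ 2*s := by
          have h1 := hωG'.1
          rw [hUydef] at h1
          simp only [Set.mem_iUnion, Set.mem_setOf_eq, not_exists, not_lt] at h1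
          have := h1 (n - m) 0
          rwa [Nat.sub_add_cancel hnm.le, Nat.zero_add] at this
        have hUy'b : ‖(a n y'y : Ω → ℂ) ω - (a m y'y : Ω → ℂ) ω‖ ≤ 2*s := by
          have h1 := hωG'.2.1
          rw [hUy'def] at h1
          simp only [Set.mem_iUnion, Set.mem_setOf_eq, not_exists, not_lt] at h1
          have := h1 (n - m) 0
          rwa [Nat.sub_add_cancel hnm.le, Nat.zero_add] at this
        have hmb : ‖(a m ww : Ω → ℂ) ω‖ ≤ δ/4 :=
          hUdwbound m (Finset.mem_range.2 (Nat.lt_succ_self m))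
        have hdiff : ‖(a n ww : Ω → ℂ) ω - (a m ww : Ω → ℂ) ω‖ ≤ 4*s := by
          rw [hsub n, hsub m]
          have heq : ((a n yy : Ω → ℂ) ω - (a n y'y : Ω → ℂ) ω)
              - ((a m yy : Ω → ℂ) ω - (a m y'y : Ω → ℂ) ω)
              = ((a n yy : Ω → ℂ) ω - (a m yy : Ω → ℂ) ω)
              - ((a n y'y : Ω → ℂ) ω - (a m y'y : Ω → ℂ) ω) := by ring
          rw [heq]
          calc ‖_ - _‖ ≤ ‖(a n yy : Ω → ℂ) ω - (a m yy : Ω → ℂ) ω‖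
              + ‖(a n y'y : Ω → ℂ) ω - (a m y'y : Ω → ℂ) ω‖ := norm_sub_le _ _
            _ ≤ 2*s + 2*s := add_le_add hUyb hUy'b
            _ = 4*s := by ring
        calc ‖(a n ww : Ω → ℂ) ω‖
            ≤ ‖(a n ww : Ω → ℂ) ω - (a m ww : Ω → ℂ) ω‖ + ‖(a m ww : Ω → ℂ) ω‖ := by
              have := norm_add_le ((a n ww : Ω → ℂ) ω - (a m ww : Ω → ℂ) ω)
                ((a m ww : Ω → ℂ) ω)
              simpa using this
          _ ≤ 4*s + δ/4 := add_le_add hdiff hmb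
          _ = 3*δ/4 := by rw [hsdef]; ring
    have hfinal : ‖(a n x : Ω → ℂ) ω‖ ≤ δ := by
      rw [hadd n]
      calc ‖(a n (x - ww) : Ω → ℂ) ω + (a n ww : Ω → ℂ) ω‖
          ≤ ‖(a n (x - ww) : Ω → ℂ) ω‖ + ‖(a n ww : Ω → ℂ) ω‖ := norm_add_le _ _
        _ ≤ 2*γ + 3*δ/4 := add_le_add (hv n) hnww
        _ ≤ δ := by linarith
    calc (‖(a n x : Ω → ℂ) ω‖₊ : ℝ≥0∞) = ENNReal.ofReal ‖(a n x : Ω → ℂ) ω‖ :=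
        by rw [← enorm_eq_nnnorm, ofReal_norm]
      _ ≤ ENNReal.ofReal δ := ENNReal.ofReal_le_ofReal hfinal
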